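/- Let α ∈ (0,1], ε ∈ (0,α) and a > 0. Then there exists a constant c > 0 such that for every r ∈ (0,1], ∫_1^∞ (1 − e^{−a r t^{α}}) t^{−ε−1} dt ≤ c r^{ε/α}. -/

import Mathlib

open MeasureTheory Set

theorem stmt4 (α ε a : ℝ) (hα : α ∈ Set.Ioc (0:ℝ) 1) (hε : ε ∈ Set.Ioo (0:ℝ) α)
    (ha : 0 < a) :
    ∃ c > 0, ∀ r ∈ Set.Ioc (0:ℝ) 1,
      ∫⁻ t in Set.Ici (1:ℝ),
          ENNReal.ofReal ((1 - Real.exp (-(a * r * t ^ α))) * t ^ (-ε - 1)) ≤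
        ENNReal.ofReal (c * r ^ (ε / α)) := by
  obtain ⟨hα0, hα1⟩ := hα
  obtain ⟨hε0, hεα⟩ := hε
  have hαε : 0 < α - ε := by linarith
  refine ⟨a / (α - ε) + 1 / ε, by positivity, ?_⟩
  rintro r ⟨hr0, hr1⟩
  set T : ℝ := r ^ (-(1/α)) with hTdef
  have hT0 : 0 < T := Real.rpow_pos_of_pos hr0 _
  have hT1 : (1:ℝ) ≤ T :=
    Real.one_le_rpow_of_pos_of_le_one_of_nonpos hr0 hr1 (neg_nonpos.mpr (by positivity))
  have hp : (-1:ℝ) < α - ε - 1 := by linarith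
  have hTa : r * T ^ (α - ε) = r ^ (ε / α) := by
    rw [hTdef]
    nth_rewrite 1 [← Real.rpow_one r]
    rw [← Real.rpow_mul hr0.le, ← Real.rpow_add hr0]
    congr 1
    field_simp
    ring
  have hTe : T ^ (-ε) = r ^ (ε / α) := by
    rw [hTdef, ← Real.rpow_mul hr0.le]
    congr 1
    field_simp
  have key : ∫⁻ t in Set.Ici (1:ℝ),
      ENNReal.ofReal ((1 - Real.exp (-(a * r * t ^ α))) * t ^ (-ε - 1)) ≤
      (∫⁻ t in Set.Ioc (0:ℝ) T, ENNReal.ofReal (a * r * t ^ (α - ε - 1))) +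
      ∫⁻ t in Set.Ioi T, ENNReal.ofReal (t ^ (-ε - 1)) := by
    rw [← Ico_union_Ici_eq_Ici hT1]
    refine le_trans (lintegral_union_le _ _ _) (add_le_add ?_ ?_)
    · refine le_trans (setLIntegral_mono' measurableSet_Ico ?_) (lintegral_mono_set ?_)
      · intro t ht
        have ht0 : (0:ℝ) < t := lt_of_lt_of_le zero_lt_one ht.1
        refine ENNReal.ofReal_le_ofReal ?_
        calc (1 - Real.exp (-(a * r * t ^ α))) * t ^ (-ε - 1)
            ≤ (a * r * t ^ α) * t ^ (-ε - 1) := by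
              refine mul_le_mul_of_nonneg_right ?_ (Real.rpow_nonneg ht0.le _)
              have := Real.add_one_le_exp (-(a * r * t ^ α))
              linarith
          _ = a * r * t ^ (α - ε - 1) := by
              rw [mul_assoc, ← Real.rpow_add ht0]
              ring_nf
      · intro t ht
        exact ⟨lt_of_lt_of_le zero_lt_one ht.1, ht.2.le⟩
    · rw [setLIntegral_congr Ioi_ae_eq_Ici.symm]
      refine setLIntegral_mono' measurableSet_Ioi ?_
      intro t ht
      have ht0 : (0:ℝ) < t := lt_trans hT0 ht
      refine ENNReal.ofReal_le_ofReal ?_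
      have h1 : 1 - Real.exp (-(a * r * t ^ α)) ≤ 1 := by
        have := Real.exp_nonneg (-(a * r * t ^ α))
        linarith
      calc (1 - Real.exp (-(a * r * t ^ α))) * t ^ (-ε - 1)
          ≤ 1 * t ^ (-ε - 1) := mul_le_mul_of_nonneg_right h1 (Real.rpow_nonneg ht0.le _)
        _ = t ^ (-ε - 1) := one_mul _
  have hint1 : IntegrableOn (fun t : ℝ => a * r * t ^ (α - ε - 1)) (Set.Ioc 0 T) := by
    have := (intervalIntegral.intervalIntegrable_rpow' (a := (0:ℝ)) (b := T) hp)
    exact ((intervalIntegrable_iff_integrableOn_Ioc_of_le hT0.le).mp this).const_mul (a * r)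
  have hI1 : ∫⁻ t in Set.Ioc (0:ℝ) T, ENNReal.ofReal (a * r * t ^ (α - ε - 1)) =
      ENNReal.ofReal (a * r * (T ^ (α - ε) / (α - ε))) := by
    rw [← ofReal_integral_eq_lintegral_ofReal hint1]
    · congr 1
      rw [MeasureTheory.integral_const_mul]
      rw [← intervalIntegral.integral_of_le hT0.le,
        integral_rpow (Or.inl hp)]
      rw [Real.zero_rpow (by linarith : α - ε - 1 + 1 ≠ 0)]
      have : α - ε - 1 + 1 = α - ε := by ring
      rw [this]
      ring
    · refine (ae_restrict_iff' measurableSet_Ioc).mpr (Filter.Eventually.of_forall ?_)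
      intro t ht
      have : (0:ℝ) ≤ t ^ (α - ε - 1) := Real.rpow_nonneg ht.1.le _
      positivity
  have hint2 : IntegrableOn (fun t : ℝ => t ^ (-ε - 1)) (Set.Ioi T) :=
    integrableOn_Ioi_rpow_of_lt (by linarith) hT0
  have hI2 : ∫⁻ t in Set.Ioi T, ENNReal.ofReal (t ^ (-ε - 1)) =
      ENNReal.ofReal (T ^ (-ε) / ε) := by
    rw [← ofReal_integral_eq_lintegral_ofReal hint2]
    · congr 1
      rw [integral_Ioi_rpow_of_lt (by linarith) hT0]
      have : -ε - 1 + 1 = -ε := by ring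
      rw [this]
      field_simp
    · refine (ae_restrict_iff' measurableSet_Ioi).mpr (Filter.Eventually.of_forall ?_)
      intro t ht
      exact Real.rpow_nonneg (le_of_lt (lt_trans hT0 ht)) _
  refine le_trans key ?_
  rw [hI1, hI2, ← ENNReal.ofReal_add (by positivity) (by positivity)]
  refine ENNReal.ofReal_le_ofReal (le_of_eq ?_)
  have h1 : a * r * (T ^ (α - ε) / (α - ε)) = a / (α - ε) * r ^ (ε / α) := by
    rw [← hTa]; ring
  rw [h1, hTe]
  ring
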